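/- arXiv:1507.05412 — 2 statements merged into one kernel-verified Lean document; each statement's English description precedes it below -/
import Mathlib

section
/- For a twice continuously differentiable zonal function f on S^{n-1}, the squared norm of the covariant Hessian satisfies |∇²f|² = (n−2)(t ∂f/∂t)² + ((1−t²) ∂²f/∂t² − t ∂f/∂t)². -/
open scoped RealInnerProductSpace
open MeasureTheory
open Topology

noncomputable section

abbrev Eucl (n : ℕ) := EuclideanSpace ℝ (Fin n)

/-- The degree-zero homogeneous extension of a function on the unit sphere. -/
def sphereExt {n : ℕ} (f : Eucl n → ℝ) : Eucl n → ℝ := fun x => f (‖x‖⁻¹ • x)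

/-- Squared norm of the Riemannian gradient on the unit sphere, computed via the
Euclidean gradient of the degree-zero homogeneous extension (which is tangential). -/
def sGradNormSq (n : ℕ) (f : Eucl n → ℝ) (u : Eucl n) : ℝ := ‖gradient (sphereExt f) u‖ ^ 2

/-- Orthogonal projection of \`v\` onto the tangent space of the unit sphere at \`u\`. -/
def tanProj {n : ℕ} (u v : Eucl n) : Eucl n := v - ⟪v, u⟫ • u

/-- Squared tensor norm of the covariant Hessian on the unit sphere: for the round sphere
the covariant Hessian of \`f\` at tangent vectors \`X, Y\` equals the Euclidean second
derivative of the degree-zero homogeneous extension evaluated at \`X, Y\`. -/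
def sHessNormSq (n : ℕ) (f : Eucl n → ℝ) (u : Eucl n) : ℝ :=
  ∑ i : Fin n, ∑ j : Fin n,
    (iteratedFDeriv ℝ 2 (sphereExt f) u
      ![tanProj u (EuclideanSpace.single i 1), tanProj u (EuclideanSpace.single j 1)]) ^ 2


variable {n : ℕ}

def zfun (e : Eucl n) (F : ℝ → ℝ) : Eucl n → ℝ := fun x => F (⟪x, e⟫ * (Real.sqrt ⟪x, x⟫)⁻¹)

lemma sqrt_inner_self (x : Eucl n) : Real.sqrt ⟪x, x⟫ = ‖x‖ := by
  rw [real_inner_self_eq_norm_mul_norm, Real.sqrt_mul_self (norm_nonneg x)]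

lemma sphereExt_eq (e : Eucl n) (F : ℝ → ℝ) (x : Eucl n) :
    sphereExt (fun y => F ⟪y, e⟫) x = zfun e F x := by
  unfold sphereExt zfun
  simp only []
  rw [real_inner_smul_left, sqrt_inner_self, mul_comm]

lemma hasFDerivAt_innerself (x : Eucl n) :
    HasFDerivAt (fun y : Eucl n => (⟪y, y⟫ : ℝ)) ((2:ℝ) • (innerSL ℝ x)) x := by
  have h := (hasFDerivAt_id x).inner ℝ (hasFDerivAt_id x)
  convert h using 1
  rotate_left 4
  ext v
  simp only [ContinuousLinearMap.smul_apply, innerSL_apply_apply, innerSL_apply_apply,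
    ContinuousLinearMap.comp_apply, ContinuousLinearMap.prod_apply,
    ContinuousLinearMap.id_apply, fderivInnerCLM_apply, id_eq, smul_eq_mul]
  rw [real_inner_comm]; ring
  all_goals rfl

lemma inner_self_one {u : Eucl n} (hu : ‖u‖ = 1) : (⟪u, u⟫ : ℝ) = 1 := by
  rw [real_inner_self_eq_norm_mul_norm, hu]; norm_num

lemma hasFDerivAt_inner_right (v x : Eucl n) :
    HasFDerivAt (fun y : Eucl n => (⟪y, v⟫ : ℝ)) (innerSL ℝ v) x := by
  have : (fun y : Eucl n => (⟪y, v⟫ : ℝ)) = fun y => (⟪v, y⟫ : ℝ) := by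
    funext y; exact real_inner_comm _ _
  rw [this]
  exact (innerSL ℝ v).hasFDerivAt

lemma hasFDerivAt_zfun (e : Eucl n) (F : ℝ → ℝ) (hF : Differentiable ℝ F)
    (x : Eucl n) (hx : x ≠ 0) :
    HasFDerivAt (zfun e F)
      ((deriv F (⟪x, e⟫ * (Real.sqrt ⟪x, x⟫)⁻¹) * (Real.sqrt ⟪x, x⟫)⁻¹) • innerSL ℝ e
        - (deriv F (⟪x, e⟫ * (Real.sqrt ⟪x, x⟫)⁻¹) * ⟪x, e⟫ * ((Real.sqrt ⟪x, x⟫)⁻¹) ^ 3)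
            • innerSL ℝ x) x := by
  have h0 : (0:ℝ) < ⟪x, x⟫ := by
    rw [real_inner_self_eq_norm_mul_norm]
    have := norm_pos_iff.mpr hx
    positivity
  have hr : (0:ℝ) < Real.sqrt ⟪x, x⟫ := Real.sqrt_pos.mpr h0
  have hsqrt : HasFDerivAt (fun y : Eucl n => Real.sqrt ⟪y, y⟫)
      ((1 / (2 * Real.sqrt ⟪x, x⟫)) • ((2:ℝ) • innerSL ℝ x)) x :=
    HasDerivAt.comp_hasFDerivAt (f := fun y : Eucl n => (⟪y, y⟫ : ℝ)) x
      (Real.hasDerivAt_sqrt h0.ne') (hasFDerivAt_innerself x)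
  have hw : HasFDerivAt (fun y : Eucl n => (Real.sqrt ⟪y, y⟫)⁻¹)
      ((-((Real.sqrt ⟪x, x⟫) ^ 2)⁻¹) • ((1 / (2 * Real.sqrt ⟪x, x⟫)) • ((2:ℝ) • innerSL ℝ x))) x :=
    HasDerivAt.comp_hasFDerivAt (f := fun y : Eucl n => Real.sqrt ⟪y, y⟫) x
      (hasDerivAt_inv hr.ne') hsqrt
  have hs : HasFDerivAt (fun y : Eucl n => ⟪y, e⟫ * (Real.sqrt ⟪y, y⟫)⁻¹)
      ((⟪x, e⟫ : ℝ) • ((-((Real.sqrt ⟪x, x⟫) ^ 2)⁻¹) • ((1 / (2 * Real.sqrt ⟪x, x⟫)) • ((2:ℝ) • innerSL ℝ x)))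
        + ((Real.sqrt ⟪x, x⟫)⁻¹) • innerSL ℝ e) x :=
    (hasFDerivAt_inner_right e x).mul hw
  have hFz := (hF _).hasDerivAt.comp_hasFDerivAt x hs
  convert hFz using 1
  rotate_left 4
  ext v
  simp only [ContinuousLinearMap.smul_apply, ContinuousLinearMap.sub_apply,
    ContinuousLinearMap.add_apply, innerSL_apply_apply, smul_eq_mul]
  field_simp
  ring
  all_goals rfl

lemma contDiffAt_zfun (e : Eucl n) (F : ℝ → ℝ) (hF : ContDiff ℝ 2 F)
    (x : Eucl n) (hx : x ≠ 0) : ContDiffAt ℝ 2 (zfun e F) x := by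
  have h0 : (0:ℝ) < ⟪x, x⟫ := by
    rw [real_inner_self_eq_norm_mul_norm]
    have := norm_pos_iff.mpr hx
    positivity
  have hr : Real.sqrt ⟪x, x⟫ ≠ 0 := (Real.sqrt_pos.mpr h0).ne'
  have hq : ContDiffAt ℝ 2 (fun y : Eucl n => (⟪y, y⟫ : ℝ)) x :=
    contDiffAt_id.inner ℝ contDiffAt_id
  have hsqrt : ContDiffAt ℝ 2 (fun y : Eucl n => Real.sqrt ⟪y, y⟫) x :=
    ContDiffAt.comp (g := fun r : ℝ => Real.sqrt r) (f := fun y : Eucl n => (⟪y, y⟫ : ℝ)) x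
      (Real.contDiffAt_sqrt h0.ne') hq
  have hw : ContDiffAt ℝ 2 (fun y : Eucl n => (Real.sqrt ⟪y, y⟫)⁻¹) x := hsqrt.inv hr
  have hce : ContDiffAt ℝ 2 (fun y : Eucl n => (⟪y, e⟫ : ℝ)) x :=
    contDiffAt_id.inner ℝ contDiffAt_const
  exact hF.contDiffAt.comp x (hce.mul hw)

lemma hess_entry (e u : Eucl n) (hu : ‖u‖ = 1) (F : ℝ → ℝ) (hF : ContDiff ℝ 2 F)
    (X Y : Eucl n) (hX : (⟪u, X⟫ : ℝ) = 0) (hY : (⟪u, Y⟫ : ℝ) = 0) :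
    iteratedFDeriv ℝ 2 (sphereExt fun x => F ⟪x, e⟫) u ![X, Y]
      = deriv (deriv F) ⟪u, e⟫ * ⟪X, e⟫ * ⟪Y, e⟫ - ⟪u, e⟫ * deriv F ⟪u, e⟫ * ⟪X, Y⟫ := by
  have hu0 : u ≠ 0 := by
    intro h; rw [h] at hu; simp at hu
  have huu : (⟪u, u⟫ : ℝ) = 1 := inner_self_one hu
  have hFd : Differentiable ℝ F := hF.differentiable (by norm_num)
  have hF1 : ContDiff ℝ 1 (deriv F) := by
    have h := (contDiff_succ_iff_deriv (n := 1) (f := F)).mp (by norm_num at hF ⊢; exact hF)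
    exact h.2.2
  have hF1d : Differentiable ℝ (deriv F) := hF1.differentiable one_ne_zero
  -- the first derivative applied to Y, as a scalar function
  set g1 : Eucl n → ℝ := fun x =>
    deriv F (⟪x, e⟫ * (Real.sqrt ⟪x, x⟫)⁻¹) *
      ((Real.sqrt ⟪x, x⟫)⁻¹ * ⟪e, Y⟫
        - ⟪x, e⟫ * ((Real.sqrt ⟪x, x⟫)⁻¹ * (Real.sqrt ⟪x, x⟫)⁻¹ * (Real.sqrt ⟪x, x⟫)⁻¹) * ⟪x, Y⟫)
    with hg1def
  have hg1 : ∀ x : Eucl n, x ≠ 0 → fderiv ℝ (zfun e F) x Y = g1 x := by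
    intro x hx
    rw [(hasFDerivAt_zfun e F hFd x hx).fderiv]
    simp only [hg1def, ContinuousLinearMap.sub_apply, ContinuousLinearMap.smul_apply,
      innerSL_apply_apply, smul_eq_mul]
    ring
  -- derivative of g1 at u
  have h0 : (0:ℝ) < ⟪u, u⟫ := by rw [huu]; norm_num
  have hr : (0:ℝ) < Real.sqrt ⟪u, u⟫ := Real.sqrt_pos.mpr h0
  have hsqrt : HasFDerivAt (fun y : Eucl n => Real.sqrt ⟪y, y⟫)
      ((1 / (2 * Real.sqrt ⟪u, u⟫)) • ((2:ℝ) • innerSL ℝ u)) u :=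
    HasDerivAt.comp_hasFDerivAt (f := fun y : Eucl n => (⟪y, y⟫ : ℝ)) u
      (Real.hasDerivAt_sqrt h0.ne') (hasFDerivAt_innerself u)
  have hw : HasFDerivAt (fun y : Eucl n => (Real.sqrt ⟪y, y⟫)⁻¹)
      ((-((Real.sqrt ⟪u, u⟫) ^ 2)⁻¹) • ((1 / (2 * Real.sqrt ⟪u, u⟫)) • ((2:ℝ) • innerSL ℝ u))) u :=
    HasDerivAt.comp_hasFDerivAt (f := fun y : Eucl n => Real.sqrt ⟪y, y⟫) u
      (hasDerivAt_inv hr.ne') hsqrt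
  have hce : HasFDerivAt (fun y : Eucl n => (⟪y, e⟫ : ℝ)) (innerSL ℝ e) u :=
    hasFDerivAt_inner_right e u
  have hcY : HasFDerivAt (fun y : Eucl n => (⟪y, Y⟫ : ℝ)) (innerSL ℝ Y) u :=
    hasFDerivAt_inner_right Y u
  have hs : HasFDerivAt (fun y : Eucl n => ⟪y, e⟫ * (Real.sqrt ⟪y, y⟫)⁻¹) _ u := hce.mul hw
  have hA : HasFDerivAt (fun y : Eucl n => deriv F (⟪y, e⟫ * (Real.sqrt ⟪y, y⟫)⁻¹)) _ u :=
    HasDerivAt.comp_hasFDerivAt (f := fun y : Eucl n => ⟪y, e⟫ * (Real.sqrt ⟪y, y⟫)⁻¹) u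
      ((hF1d _).hasDerivAt) hs
  have hw3 : HasFDerivAt (fun y : Eucl n =>
      (Real.sqrt ⟪y, y⟫)⁻¹ * (Real.sqrt ⟪y, y⟫)⁻¹ * (Real.sqrt ⟪y, y⟫)⁻¹) _ u :=
    (hw.mul hw).mul hw
  have hB : HasFDerivAt (fun y : Eucl n =>
      (Real.sqrt ⟪y, y⟫)⁻¹ * ⟪e, Y⟫
        - ⟪y, e⟫ * ((Real.sqrt ⟪y, y⟫)⁻¹ * (Real.sqrt ⟪y, y⟫)⁻¹ * (Real.sqrt ⟪y, y⟫)⁻¹) * ⟪y, Y⟫) _ u :=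
    (hw.mul_const (⟪e, Y⟫ : ℝ)).sub ((hce.mul hw3).mul hcY)
  have K : HasFDerivAt g1 _ u := hA.mul hB
  -- now assemble
  have hfun : (sphereExt fun x : Eucl n => F ⟪x, e⟫) = zfun e F := funext (sphereExt_eq e F)
  rw [iteratedFDeriv_two_apply, hfun]
  have hd1 : DifferentiableAt ℝ (fderiv ℝ (zfun e F)) u :=
    ((contDiffAt_zfun e F hF u hu0).fderiv_right (m := 1) (by norm_num)).differentiableAt one_ne_zero
  have h2 : fderiv ℝ (fun x => fderiv ℝ (zfun e F) x Y) u
      = (fderiv ℝ (fderiv ℝ (zfun e F)) u).flip Y := by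
    rw [fderiv_clm_apply hd1 (differentiableAt_const Y)]
    ext v; simp
  have hev : (fun x => fderiv ℝ (zfun e F) x Y) =ᶠ[𝓝 u] g1 := by
    filter_upwards [eventually_ne_nhds hu0] with x hx using hg1 x hx
  have h3 : fderiv ℝ (fun x => fderiv ℝ (zfun e F) x Y) u = fderiv ℝ g1 u := hev.fderiv_eq
  have key : fderiv ℝ (fderiv ℝ (zfun e F)) u X Y = fderiv ℝ g1 u X := by
    rw [← h3, h2]; rfl
  have : fderiv ℝ (fderiv ℝ (zfun e F)) u (![X, Y] 0) (![X, Y] 1)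
      = fderiv ℝ (fderiv ℝ (zfun e F)) u X Y := by
    simp [Matrix.cons_val_zero, Matrix.cons_val_one, Matrix.head_cons]
  rw [this, key, K.fderiv]
  simp only [ContinuousLinearMap.add_apply, ContinuousLinearMap.smul_apply,
    ContinuousLinearMap.sub_apply, ContinuousLinearMap.comp_apply,
    ContinuousLinearMap.mul_apply', innerSL_apply_apply, smul_eq_mul,
    ContinuousLinearMap.coe_smul', Pi.smul_apply, Pi.mul_apply, Pi.pow_apply]
  rw [huu, Real.sqrt_one, hX, hY, real_inner_comm e Y]
  simp only [inv_one, one_pow, mul_one, one_mul, mul_zero, zero_mul, neg_zero, add_zero, zero_add,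
    sub_zero, zero_sub, mul_neg, neg_mul, neg_neg]
  rw [real_inner_comm X Y] at *
  rw [real_inner_comm e X]
  ring

lemma inner_self_one' {u : Eucl n} (hu : ‖u‖ = 1) : (⟪u, u⟫ : ℝ) = 1 := by
  rw [real_inner_self_eq_norm_mul_norm, hu]; norm_num

lemma inner_tanProj_left (u v w : Eucl n) (hu : ‖u‖ = 1) :
    (⟪tanProj u v, w⟫ : ℝ) = ⟪v, w⟫ - ⟪v, u⟫ * ⟪u, w⟫ := by
  simp only [tanProj, inner_sub_left, real_inner_smul_left]

lemma inner_u_tanProj (u v : Eucl n) (hu : ‖u‖ = 1) :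
    (⟪u, tanProj u v⟫ : ℝ) = 0 := by
  simp only [tanProj, inner_sub_right, real_inner_smul_right, inner_self_one' hu, mul_one]
  rw [real_inner_comm u v]
  ring

lemma inner_tanProj_tanProj (u v w : Eucl n) (hu : ‖u‖ = 1) :
    (⟪tanProj u v, tanProj u w⟫ : ℝ) = ⟪v, w⟫ - ⟪v, u⟫ * ⟪w, u⟫ := by
  rw [inner_tanProj_left u v _ hu]
  simp only [tanProj, inner_sub_right, real_inner_smul_right, inner_self_one' hu, mul_one]
  rw [real_inner_comm u w]
  ring

lemma inner_single (x : Eucl n) (i : Fin n) :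
    (⟪EuclideanSpace.single i (1:ℝ), x⟫ : ℝ) = x i := by
  simp [EuclideanSpace.inner_single_left]

lemma inner_eq_sum (x y : Eucl n) : (⟪x, y⟫ : ℝ) = ∑ i, x i * y i := by
  simp [PiLp.inner_apply, RCLike.inner_apply, conj_trivial, mul_comm]

lemma sum_sq_alg (n : ℕ) (A B t : ℝ) (ec uc : Fin n → ℝ)
    (Se : ∑ i, ec i * ec i = 1) (Su : ∑ i, uc i * uc i = 1)
    (Sue : ∑ i, uc i * ec i = t) :
    ∑ i : Fin n, ∑ j : Fin n,
        (A * (ec i - uc i * t) * (ec j - uc j * t)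
          - B * ((if i = j then (1:ℝ) else 0) - uc i * uc j)) ^ 2
      = A ^ 2 * (1 - t ^ 2) ^ 2 - 2 * A * B * (1 - t ^ 2) + B ^ 2 * ((n:ℝ) - 1) := by
  set a : Fin n → ℝ := fun i => ec i - uc i * t with ha
  have Sa : ∑ i, a i * a i = 1 - t ^ 2 := by
    have h : ∀ i, a i * a i
        = ec i * ec i - (2 * t) * (uc i * ec i) + t ^ 2 * (uc i * uc i) := by
      intro i; simp only [ha]; ring
    rw [Finset.sum_congr rfl fun i _ => h i]
    rw [Finset.sum_add_distrib, Finset.sum_sub_distrib, ← Finset.mul_sum, ← Finset.mul_sum,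
      Se, Su, Sue]
    ring
  have Sau : ∑ i, a i * uc i = 0 := by
    have h : ∀ i, a i * uc i = uc i * ec i - t * (uc i * uc i) := by
      intro i; simp only [ha]; ring
    rw [Finset.sum_congr rfl fun i _ => h i, Finset.sum_sub_distrib, ← Finset.mul_sum,
      Su, Sue]
    ring
  have hmul : ∀ (f g : Fin n → ℝ) (c : ℝ),
      ∑ i : Fin n, ∑ j : Fin n, c * (f i * g j) = c * ((∑ i, f i) * (∑ j, g j)) := by
    intro f g c
    rw [Finset.sum_mul_sum, Finset.mul_sum]
    exact Finset.sum_congr rfl fun i _ => by rw [Finset.mul_sum]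
  have hdiag : ∀ (f : Fin n → Fin n → ℝ) (c : ℝ),
      ∑ i : Fin n, ∑ j : Fin n, c * (if i = j then f i j else 0) = c * ∑ i, f i i := by
    intro f c
    rw [Finset.mul_sum]
    refine Finset.sum_congr rfl fun i _ => ?_
    rw [← Finset.mul_sum]
    congr 1
    simpa using Finset.sum_ite_eq Finset.univ i (f i)
  have expand : ∀ i j : Fin n,
      (A * a i * a j - B * ((if i = j then (1:ℝ) else 0) - uc i * uc j)) ^ 2
        = A ^ 2 * ((a i * a i) * (a j * a j))
          - 2 * A * B * (if i = j then a i * a j else 0)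
          + 2 * A * B * ((a i * uc i) * (a j * uc j))
          + B ^ 2 * (if i = j then (1:ℝ) else 0)
          - 2 * B ^ 2 * (if i = j then uc i * uc j else 0)
          + B ^ 2 * ((uc i * uc i) * (uc j * uc j)) := by
    intro i j
    by_cases h : i = j
    · simp only [if_pos h]; ring
    · simp only [if_neg h]; ring
  rw [Finset.sum_congr rfl fun i _ => Finset.sum_congr rfl fun j _ => expand i j]
  simp only [Finset.sum_add_distrib, Finset.sum_sub_distrib]
  rw [hmul (fun i => a i * a i) (fun j => a j * a j) (A ^ 2),
    hmul (fun i => a i * uc i) (fun j => a j * uc j) (2 * A * B),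
    hmul (fun i => uc i * uc i) (fun j => uc j * uc j) (B ^ 2),
    hdiag (fun i j => a i * a j) (2 * A * B),
    hdiag (fun _ _ => (1:ℝ)) (B ^ 2),
    hdiag (fun i j => uc i * uc j) (2 * B ^ 2),
    Sa, Sau, Su]
  simp only [Finset.sum_const, Finset.card_univ, Fintype.card_fin, nsmul_eq_mul, mul_one]
  ring

/-- for a C² zonal function `f(u) = F(⟪u,ē⟫)` on `S^{n-1}`,
`|∇²f|² = (n-2)(t F'(t))² + ((1-t²) F''(t) - t F'(t))²` at points with
`t = ⟪u,ē⟫ ∈ (-1,1)`. -/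
theorem zonal_hess_norm_sq (n : ℕ) (hn : 2 ≤ n) (e : Eucl n) (he : ‖e‖ = 1)
    (F : ℝ → ℝ) (hF : ContDiff ℝ 2 F)
    (u : Eucl n) (hu : ‖u‖ = 1) (t : ℝ) (ht : t = ⟪u, e⟫) (ht' : t ∈ Set.Ioo (-1 : ℝ) 1) :
    sHessNormSq n (fun x => F ⟪x, e⟫) u
      = ((n : ℝ) - 2) * (t * deriv F t) ^ 2
        + ((1 - t ^ 2) * deriv (deriv F) t - t * deriv F t) ^ 2 := by
  have huu : (⟪u, u⟫ : ℝ) = 1 := inner_self_one hu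
  have hee : (⟪e, e⟫ : ℝ) = 1 := inner_self_one he
  have hXu : ∀ i : Fin n, (⟪u, tanProj u (EuclideanSpace.single i 1)⟫ : ℝ) = 0 :=
    fun i => inner_u_tanProj u _ hu
  have hXe : ∀ i : Fin n, (⟪tanProj u (EuclideanSpace.single i 1), e⟫ : ℝ) = e i - u i * t := by
    intro i
    rw [inner_tanProj_left u _ e hu, inner_single, inner_single, ← ht]
  have hXX : ∀ i j : Fin n,
      (⟪tanProj u (EuclideanSpace.single i 1), tanProj u (EuclideanSpace.single j 1)⟫ : ℝ)
        = (if i = j then (1:ℝ) else 0) - u i * u j := by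
    intro i j
    rw [inner_tanProj_tanProj u _ _ hu, inner_single, inner_single, inner_single]
    congr 1
    simp [EuclideanSpace.single_apply]
  have hent : ∀ i j : Fin n,
      iteratedFDeriv ℝ 2 (sphereExt fun x => F ⟪x, e⟫) u
          ![tanProj u (EuclideanSpace.single i 1), tanProj u (EuclideanSpace.single j 1)]
        = deriv (deriv F) t * (e i - u i * t) * (e j - u j * t)
          - (t * deriv F t) * ((if i = j then (1:ℝ) else 0) - u i * u j) := by
    intro i j
    rw [hess_entry e u hu F hF _ _ (hXu i) (hXu j), hXe i, hXe j, hXX i j, ← ht]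
  unfold sHessNormSq
  rw [Finset.sum_congr rfl fun i _ => Finset.sum_congr rfl fun j _ => by rw [hent i j]]
  rw [sum_sq_alg n (deriv (deriv F) t) (t * deriv F t) t (fun i => e i) (fun i => u i)
    (by rw [← inner_eq_sum, hee]) (by rw [← inner_eq_sum, huu]) (by rw [← inner_eq_sum, ← ht])]
  ring
end
end

section
/- For every valuation ψ : K^n → ℝ that is continuous, translation invariant, and homogeneous of degree 1, ψ is Minkowski additive: ψ(K + L) = ψ(K) + ψ(L) for all convex bodies K, L, where + denotes Minkowski addition. -/
open scoped RealInnerProductSpace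
open MeasureTheory

noncomputable section

namespace SpiegelProof

open scoped Pointwise
open Metric Filter Set Topology


variable {n : ℕ}

/-- point body -/
def pt (v : Eucl n) : ConvexBody (Eucl n) :=
  ⟨{v}, convex_singleton v, isCompact_singleton, Set.singleton_nonempty v⟩

@[simp] lemma coe_pt (v : Eucl n) : (pt v : Set (Eucl n)) = {v} := rfl

variable (ψ : ConvexBody (Eucl n) → ℝ)

structure Hyp : Prop where
  hval : ∀ K L M N : ConvexBody (Eucl n),
      Convex ℝ ((K : Set (Eucl n)) ∪ L) →
      (M : Set (Eucl n)) = (K : Set (Eucl n)) ∪ L →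
      (N : Set (Eucl n)) = (K : Set (Eucl n)) ∩ L →
      ψ K + ψ L = ψ M + ψ N
  hcont : Continuous ψ
  htrans : ∀ (x : Eucl n) (K K' : ConvexBody (Eucl n)),
      (K' : Set (Eucl n)) = (fun y => x + y) '' (K : Set (Eucl n)) → ψ K' = ψ K
  hhom : ∀ (c : ℝ), 0 < c → ∀ K : ConvexBody (Eucl n), ψ (c • K) = c * ψ K

/-- `A` is Minkowski additive for `ψ`. -/
def Good (A : ConvexBody (Eucl n)) : Prop := ∀ B, ψ (A + B) = ψ A + ψ B

variable {ψ}

lemma good_congr {A A' : ConvexBody (Eucl n)} (hAA : A = A') (h : Good ψ A) : Good ψ A' :=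
  hAA ▸ h

lemma psi_pt (h : Hyp ψ) (v : Eucl n) : ψ (pt v) = 0 := by
  have h2 : (2:ℝ) • pt (0 : Eucl n) = pt 0 := by
    ext1
    rw [ConvexBody.coe_smul, coe_pt, Set.smul_set_singleton, smul_zero]
  have hh := h.hhom 2 two_pos (pt (0 : Eucl n))
  rw [h2] at hh
  have h0 : ψ (pt (0 : Eucl n)) = 0 := by linarith
  have ht := h.htrans v (pt 0) (pt v) (by
    rw [coe_pt, coe_pt, Set.image_singleton, add_zero])
  rw [ht, h0]

lemma psi_translate (h : Hyp ψ) (v : Eucl n) (A : ConvexBody (Eucl n)) :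
    ψ (pt v + A) = ψ A := by
  apply h.htrans v A (pt v + A)
  rw [ConvexBody.coe_add, coe_pt, Set.singleton_add]

lemma good_pt (h : Hyp ψ) (v : Eucl n) : Good ψ (pt v) := by
  intro B
  rw [psi_translate h, psi_pt h, zero_add]

lemma good_add {A A' : ConvexBody (Eucl n)} (hA : Good ψ A) (hA' : Good ψ A') :
    Good ψ (A + A') := by
  intro B
  rw [add_assoc, hA (A' + B), hA' B, hA A', add_assoc]

lemma smul_body_zero (A : ConvexBody (Eucl n)) : (0:ℝ) • A = pt 0 := by
  ext1
  rw [ConvexBody.coe_smul, Set.zero_smul_set A.nonempty, coe_pt]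
  rfl

lemma good_smul (h : Hyp ψ) {A : ConvexBody (Eucl n)} {c : ℝ} (hc : 0 ≤ c)
    (hA : Good ψ A) : Good ψ (c • A) := by
  rcases eq_or_lt_of_le hc with hc0 | hc0
  · rw [← hc0, smul_body_zero]; exact good_pt h 0
  · intro B
    have key : c • A + B = c • (A + c⁻¹ • B) := by
      rw [smul_add, smul_smul, mul_inv_cancel₀ (ne_of_gt hc0), one_smul]
    rw [key, h.hhom c hc0, hA (c⁻¹ • B), h.hhom c⁻¹ (by positivity) B,
      h.hhom c hc0 A]
    field_simp





/-- Minkowski addition distributes over intersections of bodies with convex union. -/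
lemma inter_add (P Q B : ConvexBody (Eucl n))
    (hconv : Convex ℝ ((P : Set (Eucl n)) ∪ Q)) :
    ((P : Set (Eucl n)) ∩ Q) + (B : Set (Eucl n))
      = ((P : Set (Eucl n)) + B) ∩ ((Q : Set (Eucl n)) + B) := by
  apply Set.Subset.antisymm
  · rintro z ⟨m, hm, b, hb, rfl⟩
    exact ⟨⟨m, hm.1, b, hb, rfl⟩, ⟨m, hm.2, b, hb, rfl⟩⟩
  · rintro z ⟨⟨p, hp, b₁, hb₁, hz₁⟩, ⟨q, hq, b₂, hb₂, hz₂⟩⟩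
    set f : ℝ → Eucl n := fun l => l • p + (1 - l) • q with hf
    have hfc : Continuous f := by
      apply Continuous.add
      · exact (continuous_id.smul continuous_const)
      · exact ((continuous_const.sub continuous_id).smul continuous_const)
    set S : Set ℝ := Set.Icc (0:ℝ) 1 ∩ f ⁻¹' (Q : Set (Eucl n)) with hS
    have hS0 : (0:ℝ) ∈ S := by
      constructor
      · exact ⟨le_refl 0, zero_le_one⟩
      · show f 0 ∈ (Q : Set (Eucl n))
        simp only [hf, zero_smul, sub_zero, one_smul, zero_add]
        exact hq
    have hSclosed : IsClosed S := isClosed_Icc.inter (Q.isClosed.preimage hfc)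
    have hSbdd : BddAbove S := ⟨1, fun x hx => hx.1.2⟩
    set l := sSup S with hl
    have hlS : l ∈ S := hSclosed.csSup_mem ⟨0, hS0⟩ hSbdd
    have hl0 : 0 ≤ l := hlS.1.1
    have hl1 : l ≤ 1 := hlS.1.2
    have hmQ : f l ∈ (Q : Set (Eucl n)) := hlS.2
    have hmP : f l ∈ (P : Set (Eucl n)) := by
      rcases eq_or_lt_of_le hl1 with h1 | h1
      · have : f l = p := by
          rw [h1]; simp only [hf, one_smul, sub_self, zero_smul, add_zero]
        rw [this]; exact hp
      · have key : ∀ m : ℕ, f (l + (1 - l)/(m + 1)) ∈ (P : Set (Eucl n)) := by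
          intro m
          set l' := l + (1 - l)/(m + 1 : ℝ) with hl'
          have hpos : 0 < (1 - l)/(m + 1 : ℝ) := div_pos (by linarith) (by positivity)
          have hgt : l < l' := by simp only [hl']; linarith
          have hle1 : l' ≤ 1 := by
            have h1m : (1 - l)/(m + 1 : ℝ) ≤ 1 - l := by
              apply div_le_self (by linarith)
              have : (0:ℝ) ≤ (m:ℝ) := Nat.cast_nonneg m
              linarith
            simp only [hl']; linarith
          have hl'0 : 0 ≤ l' := le_trans hl0 (le_of_lt hgt)
          have hmem : f l' ∈ (P : Set (Eucl n)) ∪ Q := by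
            have hpu : p ∈ (P : Set (Eucl n)) ∪ Q := Or.inl hp
            have hqu : q ∈ (P : Set (Eucl n)) ∪ Q := Or.inr hq
            exact hconv hpu hqu hl'0 (by linarith) (by ring)
          rcases hmem with hP | hQ
          · exact hP
          · exfalso
            have : l' ∈ S := ⟨⟨hl'0, hle1⟩, hQ⟩
            have : l' ≤ l := le_csSup hSbdd this
            linarith
        have hten : Tendsto (fun m : ℕ => f (l + (1 - l)/(m + 1))) atTop (𝓝 (f l)) := by
          apply (hfc.tendsto l).comp
          have : Tendsto (fun m : ℕ => (1 - l)/(m + 1)) atTop (𝓝 0) := by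
            have h0 : Tendsto (fun m : ℕ => 1/((m:ℝ) + 1)) atTop (𝓝 0) :=
              tendsto_one_div_add_atTop_nhds_zero_nat
            have := h0.const_mul (1 - l)
            simpa [mul_one_div, div_eq_mul_inv] using this
          have := this.const_add l
          simpa using this
        exact P.isClosed.mem_of_tendsto hten (Filter.Eventually.of_forall key)
    refine ⟨f l, ⟨hmP, hmQ⟩, l • b₁ + (1 - l) • b₂,
      B.convex hb₁ hb₂ hl0 (by linarith) (by ring), ?_⟩
    simp only at hz₁ hz₂
    show f l + (l • b₁ + (1 - l) • b₂) = z
    have expand : f l + (l • b₁ + (1 - l) • b₂) = l • (p + b₁) + (1 - l) • (q + b₂) := by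
      simp only [hf, smul_add]; abel
    rw [expand, hz₁, hz₂]
    module



variable {ψ : ConvexBody (Eucl n) → ℝ}

/-- Valuation property transported along Minkowski addition. -/
lemma val_add (h : Hyp ψ) (P Q M N B : ConvexBody (Eucl n))
    (hconv : Convex ℝ ((P : Set (Eucl n)) ∪ Q))
    (hM : (M : Set (Eucl n)) = (P : Set (Eucl n)) ∪ Q)
    (hN : (N : Set (Eucl n)) = (P : Set (Eucl n)) ∩ Q) :
    ψ (P + B) + ψ (Q + B) = ψ (M + B) + ψ (N + B) := by
  have hMB : ((M + B : ConvexBody (Eucl n)) : Set (Eucl n))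
      = ((P + B : ConvexBody (Eucl n)) : Set (Eucl n)) ∪ ((Q + B : ConvexBody (Eucl n)) : Set (Eucl n)) := by
    rw [ConvexBody.coe_add, ConvexBody.coe_add, ConvexBody.coe_add, hM, Set.union_add]
  apply h.hval (P + B) (Q + B) (M + B) (N + B)
  · rw [← hMB]; exact (M + B).convex
  · exact hMB
  · rw [ConvexBody.coe_add, ConvexBody.coe_add, ConvexBody.coe_add, hN,
      inter_add P Q B hconv]

/-- Hausdorff distance bound: adding a body is 1-Lipschitz. -/
lemma dist_add_right_le (K L B : ConvexBody (Eucl n)) :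
    dist (K + B) (L + B) ≤ dist K L := by
  have haux : ∀ (K L : ConvexBody (Eucl n)), ∀ x ∈ ((K + B : ConvexBody (Eucl n)) : Set (Eucl n)),
      ∃ y ∈ ((L + B : ConvexBody (Eucl n)) : Set (Eucl n)), dist x y ≤ dist K L := by
    intro K L x hx
    rw [ConvexBody.coe_add] at hx
    obtain ⟨k, hk, b, hb, rfl⟩ := hx
    obtain ⟨l, hl, hdl⟩ := L.isCompact.exists_infDist_eq_dist L.nonempty k
    have hkl : dist k l ≤ dist K L := by
      rw [← hdl, ← ConvexBody.hausdorffDist_coe]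
      exact Metric.infDist_le_hausdorffDist_of_mem hk ConvexBody.hausdorffEdist_ne_top
    refine ⟨l + b, ?_, ?_⟩
    · rw [ConvexBody.coe_add]; exact Set.add_mem_add hl hb
    · simp only
      rw [dist_add_right]
      exact hkl
  rw [← ConvexBody.hausdorffDist_coe]
  apply Metric.hausdorffDist_le_of_mem_dist dist_nonneg
  · exact haux K L
  · intro y hy
    obtain ⟨x, hx, hd⟩ := haux L K y hy
    exact ⟨x, hx, by rw [dist_comm K L]; rw [dist_comm] at hd ⊢; exact hd⟩

lemma continuous_add_body (B : ConvexBody (Eucl n)) :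
    Continuous (fun K : ConvexBody (Eucl n) => K + B) := by
  apply LipschitzWith.continuous (K := 1)
  apply LipschitzWith.of_dist_le_mul
  intro K L
  rw [NNReal.coe_one, one_mul]
  exact dist_add_right_le K L B

lemma dist_smul_le (K : ConvexBody (Eucl n)) {C : ℝ} (hC0 : 0 ≤ C)
    (hC : ∀ x ∈ (K : Set (Eucl n)), ‖x‖ ≤ C) (s t : ℝ) :
    dist (s • K) (t • K) ≤ C * dist s t := by
  have haux : ∀ (s t : ℝ), ∀ x ∈ ((s • K : ConvexBody (Eucl n)) : Set (Eucl n)),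
      ∃ y ∈ ((t • K : ConvexBody (Eucl n)) : Set (Eucl n)), dist x y ≤ C * dist s t := by
    intro s t x hx
    rw [ConvexBody.coe_smul] at hx
    obtain ⟨k, hk, rfl⟩ := hx
    refine ⟨t • k, ?_, ?_⟩
    · rw [ConvexBody.coe_smul]; exact Set.smul_mem_smul_set hk
    · rw [dist_eq_norm, ← sub_smul, norm_smul, Real.norm_eq_abs, Real.dist_eq]
      calc |s - t| * ‖k‖ ≤ |s - t| * C := mul_le_mul_of_nonneg_left (hC k hk) (abs_nonneg _)
        _ = C * |s - t| := mul_comm _ _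
  rw [← ConvexBody.hausdorffDist_coe]
  apply Metric.hausdorffDist_le_of_mem_dist (by positivity)
  · exact haux s t
  · intro y hy
    obtain ⟨x, hx, hd⟩ := haux t s y hy
    exact ⟨x, hx, by rw [dist_comm s t]; rw [dist_comm] at hd ⊢; simpa [dist_comm s t] using hd⟩

lemma continuous_smul_body (K : ConvexBody (Eucl n)) :
    Continuous (fun t : ℝ => t • K) := by
  obtain ⟨C, hC0, hC⟩ := K.isBounded.exists_pos_norm_le
  apply LipschitzWith.continuous (K := Real.toNNReal C)
  apply LipschitzWith.of_dist_le_mul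
  intro s t
  rw [Real.coe_toNNReal C (le_of_lt hC0)]
  exact dist_smul_le K (le_of_lt hC0) (fun x hx => hC x hx) s t





lemma smul_mem_smul_smul {c d : ℝ} {u : Eucl n} {S : Set (Eucl n)} (hu : u ∈ d • S) :
    c • u ∈ (c * d) • S := by
  obtain ⟨x, hx, rfl⟩ := hu
  exact ⟨x, hx, (smul_smul c d x).symm⟩

lemma add_mem_smul_merge {α β : ℝ} (hα : 0 ≤ α) (hβ : 0 ≤ β) {S : Set (Eucl n)}
    (hS : Convex ℝ S) {u w : Eucl n} (hu : u ∈ α • S) (hw : w ∈ β • S) :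
    u + w ∈ (α + β) • S := by
  rw [hS.add_smul hα hβ]; exact Set.add_mem_add hu hw

variable (X Y : ConvexBody (Eucl n))

def mixSet (τ : ℝ) : Set (Eucl n) := (1 - τ) • (X : Set (Eucl n)) + τ • (Y : Set (Eucl n))

lemma mem_mixSet {τ : ℝ} {z : Eucl n} :
    z ∈ mixSet X Y τ ↔
      ∃ x ∈ (X : Set (Eucl n)), ∃ y ∈ (Y : Set (Eucl n)), (1 - τ) • x + τ • y = z := by
  constructor
  · rintro ⟨u, ⟨x, hx, rfl⟩, w, ⟨y, hy, rfl⟩, rfl⟩; exact ⟨x, hx, y, hy, rfl⟩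
  · rintro ⟨x, hx, y, hy, rfl⟩; exact ⟨_, ⟨x, hx, rfl⟩, _, ⟨y, hy, rfl⟩, rfl⟩

lemma mix_combo {τ₁ τ₂ a b : ℝ} (ha : 0 ≤ a) (hb : 0 ≤ b) (hab : a + b = 1)
    (hτ₁ : 0 ≤ τ₁) (hτ₁' : τ₁ ≤ 1) (hτ₂ : 0 ≤ τ₂) (hτ₂' : τ₂ ≤ 1)
    {z₁ z₂ : Eucl n} (h₁ : z₁ ∈ mixSet X Y τ₁) (h₂ : z₂ ∈ mixSet X Y τ₂) :
    a • z₁ + b • z₂ ∈ mixSet X Y (a * τ₁ + b * τ₂) := by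
  obtain ⟨u₁, hu₁, w₁, hw₁, rfl⟩ := h₁
  obtain ⟨u₂, hu₂, w₂, hw₂, rfl⟩ := h₂
  have hx : a • u₁ + b • u₂ ∈ (1 - (a * τ₁ + b * τ₂)) • (X : Set (Eucl n)) := by
    have hco : a * (1 - τ₁) + b * (1 - τ₂) = 1 - (a * τ₁ + b * τ₂) := by
      linear_combination hab
    rw [← hco]
    exact add_mem_smul_merge (mul_nonneg ha (by linarith)) (mul_nonneg hb (by linarith))
      X.convex (smul_mem_smul_smul hu₁) (smul_mem_smul_smul hu₂)
  have hy : a • w₁ + b • w₂ ∈ (a * τ₁ + b * τ₂) • (Y : Set (Eucl n)) :=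
    add_mem_smul_merge (mul_nonneg ha hτ₁) (mul_nonneg hb hτ₂)
      Y.convex (smul_mem_smul_smul hw₁) (smul_mem_smul_smul hw₂)
  refine ⟨_, hx, _, hy, ?_⟩
  module

def slabSet (x y : ℝ) : Set (Eucl n) := ⋃ τ ∈ Set.Icc x y, mixSet X Y τ

lemma mem_slabSet {x y : ℝ} {z : Eucl n} :
    z ∈ slabSet X Y x y ↔ ∃ τ ∈ Set.Icc x y, z ∈ mixSet X Y τ := by
  simp [slabSet]

lemma convex_slabSet {x y : ℝ} (h0 : 0 ≤ x) (h1 : y ≤ 1) :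
    Convex ℝ (slabSet X Y x y) := by
  intro z₁ hz₁ z₂ hz₂ a b ha hb hab
  rw [mem_slabSet] at hz₁ hz₂ ⊢
  obtain ⟨τ₁, hτ₁, h₁⟩ := hz₁
  obtain ⟨τ₂, hτ₂, h₂⟩ := hz₂
  refine ⟨a * τ₁ + b * τ₂, ⟨?_, ?_⟩, ?_⟩
  · nlinarith [hτ₁.1, hτ₂.1]
  · nlinarith [hτ₁.2, hτ₂.2]
  · exact mix_combo X Y ha hb hab (le_trans h0 hτ₁.1) (le_trans hτ₁.2 h1)
      (le_trans h0 hτ₂.1) (le_trans hτ₂.2 h1) h₁ h₂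

def joinSet : Set (Eucl n) := slabSet X Y 0 1

lemma subset_joinSet_left : (X : Set (Eucl n)) ⊆ joinSet X Y := by
  intro z hz
  obtain ⟨y₀, hy₀⟩ := Y.nonempty
  exact (mem_slabSet X Y).2 ⟨0, ⟨le_rfl, zero_le_one⟩, (mem_mixSet X Y).2 ⟨z, hz, y₀, hy₀, by simp⟩⟩

lemma subset_joinSet_right : (Y : Set (Eucl n)) ⊆ joinSet X Y := by
  intro z hz
  obtain ⟨x₀, hx₀⟩ := X.nonempty
  exact (mem_slabSet X Y).2 ⟨1, ⟨zero_le_one, le_rfl⟩, (mem_mixSet X Y).2 ⟨x₀, hx₀, z, hz, by simp⟩⟩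

lemma joinSet_eq_hull : joinSet X Y = convexHull ℝ ((X : Set (Eucl n)) ∪ Y) := by
  apply Set.Subset.antisymm
  · intro z hz
    rw [joinSet, mem_slabSet] at hz
    obtain ⟨τ, hτ, hz⟩ := hz
    rw [mem_mixSet] at hz
    obtain ⟨x, hx, y, hy, rfl⟩ := hz
    have hseg : (1 - τ) • x + τ • y ∈ segment ℝ x y :=
      ⟨1 - τ, τ, by linarith [hτ.2], hτ.1, by ring, rfl⟩
    have hx' : x ∈ (X : Set (Eucl n)) ∪ (Y : Set (Eucl n)) := Or.inl hx
    have hy' : y ∈ (X : Set (Eucl n)) ∪ (Y : Set (Eucl n)) := Or.inr hy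
    exact segment_subset_convexHull hx' hy' hseg
  · apply convexHull_min
    · rintro z (hz | hz)
      · exact subset_joinSet_left X Y hz
      · exact subset_joinSet_right X Y hz
    · exact convex_slabSet X Y le_rfl le_rfl

lemma isCompact_joinSet : IsCompact (joinSet X Y) := by
  have himg : joinSet X Y =
      (fun p : ℝ × Eucl n × Eucl n => (1 - p.1) • p.2.1 + p.1 • p.2.2) ''
        ((Set.Icc (0:ℝ) 1) ×ˢ ((X : Set (Eucl n)) ×ˢ (Y : Set (Eucl n)))) := by
    ext z
    constructor
    · intro hz
      rw [joinSet, mem_slabSet] at hz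
      obtain ⟨τ, hτ, hz⟩ := hz
      rw [mem_mixSet] at hz
      obtain ⟨x, hx, y, hy, rfl⟩ := hz
      exact ⟨⟨τ, x, y⟩, ⟨hτ, hx, hy⟩, rfl⟩
    · rintro ⟨⟨τ, x, y⟩, ⟨hτ, hx, hy⟩, rfl⟩
      exact (mem_slabSet X Y).2 ⟨τ, hτ, (mem_mixSet X Y).2 ⟨x, hx, y, hy, rfl⟩⟩
  rw [himg]
  apply IsCompact.image
  · exact isCompact_Icc.prod (X.isCompact.prod Y.isCompact)
  · apply Continuous.add
    · exact (continuous_const.sub continuous_fst).smul (continuous_snd.fst)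
    · exact continuous_fst.smul (continuous_snd.snd)

def joinBody : ConvexBody (Eucl n) :=
  ⟨joinSet X Y,
    by rw [joinSet_eq_hull]; exact convex_convexHull ℝ _,
    isCompact_joinSet X Y,
    X.nonempty.mono (subset_joinSet_left X Y)⟩

@[simp] lemma coe_joinBody : (joinBody X Y : Set (Eucl n)) = joinSet X Y := rfl

def slabBody (x y : ℝ) : ConvexBody (Eucl n) :=
  (1 - y) • X + x • Y + (y - x) • joinBody X Y

lemma coe_slabBody_raw (x y : ℝ) :
    (slabBody X Y x y : Set (Eucl n)) =
      (1 - y) • (X : Set (Eucl n)) + x • (Y : Set (Eucl n)) + (y - x) • joinSet X Y := by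
  simp [slabBody, ConvexBody.coe_add, ConvexBody.coe_smul]

lemma coe_slabBody {x y : ℝ} (h0 : 0 ≤ x) (hxy : x ≤ y) (h1 : y ≤ 1) :
    (slabBody X Y x y : Set (Eucl n)) = slabSet X Y x y := by
  rw [coe_slabBody_raw]
  apply Set.Subset.antisymm
  · rintro z ⟨w, ⟨u, hu, v, hv, rfl⟩, c, hc, rfl⟩
    obtain ⟨j, hj, rfl⟩ := hc
    rw [joinSet, mem_slabSet] at hj
    obtain ⟨σ, hσ, hj⟩ := hj
    rw [mem_mixSet] at hj
    obtain ⟨x₀, hx₀, y₀, hy₀, rfl⟩ := hj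
    rw [mem_slabSet]
    refine ⟨x + (y - x) * σ, ⟨?_, ?_⟩, ?_⟩
    · nlinarith [hσ.1]
    · nlinarith [hσ.2]
    · have hX : u + ((y - x) * (1 - σ)) • x₀ ∈
          (1 - (x + (y - x) * σ)) • (X : Set (Eucl n)) := by
        have hco : (1 - y) + (y - x) * (1 - σ) = 1 - (x + (y - x) * σ) := by ring
        rw [← hco]
        exact add_mem_smul_merge (by linarith) (by nlinarith [hσ.2])
          X.convex hu ⟨x₀, hx₀, rfl⟩
      have hY : v + ((y - x) * σ) • y₀ ∈ (x + (y - x) * σ) • (Y : Set (Eucl n)) := by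
        exact add_mem_smul_merge h0 (by nlinarith [hσ.1]) Y.convex hv ⟨y₀, hy₀, rfl⟩
      refine ⟨_, hX, _, hY, ?_⟩
      module
  · intro z hz
    rw [mem_slabSet] at hz
    obtain ⟨τ, ⟨hτ1, hτ2⟩, hz⟩ := hz
    rw [mem_mixSet] at hz
    obtain ⟨x₀, hx₀, y₀, hy₀, rfl⟩ := hz
    refine ⟨(1 - y) • x₀ + x • y₀, ⟨_, ⟨x₀, hx₀, rfl⟩, _, ⟨y₀, hy₀, rfl⟩, rfl⟩,
      (y - τ) • x₀ + (τ - x) • y₀, ?_, by module⟩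
    rcases eq_or_lt_of_le hxy with heq | hlt
    · have hτx : τ = x := le_antisymm (heq ▸ hτ2) hτ1
      have h1' : (y - τ) • x₀ + (τ - x) • y₀ = 0 := by
        rw [hτx, ← heq]; simp [sub_self]
      rw [h1', ← heq, sub_self,
        Set.zero_smul_set (X.nonempty.mono (subset_joinSet_left X Y))]
      exact Set.zero_mem_zero
    · have hyx : (0:ℝ) < y - x := by linarith
      refine ⟨((y - τ)/(y - x)) • x₀ + ((τ - x)/(y - x)) • y₀, ?_, ?_⟩
      · rw [joinSet, mem_slabSet]
        refine ⟨(τ - x)/(y - x), ⟨div_nonneg (by linarith) (le_of_lt hyx),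
          by rw [div_le_one hyx]; linarith⟩, ?_⟩
        rw [mem_mixSet]
        refine ⟨x₀, hx₀, y₀, hy₀, ?_⟩
        have hco : 1 - (τ - x)/(y - x) = (y - τ)/(y - x) := by
          field_simp
          ring
        rw [hco]

      · show (y - x) • (((y - τ) / (y - x)) • x₀ + ((τ - x) / (y - x)) • y₀)
            = (y - τ) • x₀ + (τ - x) • y₀
        rw [smul_add, smul_smul, smul_smul,
          mul_div_cancel₀ _ (ne_of_gt hyx), mul_div_cancel₀ _ (ne_of_gt hyx)]

lemma slabSet_union {x y z : ℝ} (hxy : x ≤ y) (hyz : y ≤ z) :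
    slabSet X Y x y ∪ slabSet X Y y z = slabSet X Y x z := by
  unfold slabSet
  rw [← Set.biUnion_union, Set.Icc_union_Icc_eq_Icc hxy hyz]

lemma slabSet_inter {x y z : ℝ} (h0 : 0 ≤ x) (hxy : x ≤ y) (hyz : y ≤ z) (h1 : z ≤ 1) :
    slabSet X Y x y ∩ slabSet X Y y z = mixSet X Y y := by
  apply Set.Subset.antisymm
  · rintro w ⟨hw1, hw2⟩
    rw [mem_slabSet] at hw1 hw2
    obtain ⟨τ₁, hτ₁, h₁⟩ := hw1
    obtain ⟨τ₂, hτ₂, h₂⟩ := hw2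
    rcases eq_or_lt_of_le (hτ₁.2 : τ₁ ≤ y) with hy1 | hy1
    · rw [← hy1]; exact h₁
    · have hττ : τ₁ < τ₂ := lt_of_lt_of_le hy1 hτ₂.1
      set μ := (y - τ₁)/(τ₂ - τ₁) with hμ
      have hμ0 : 0 ≤ μ := div_nonneg (by linarith) (by linarith)
      have hμ1 : μ ≤ 1 := by rw [hμ, div_le_one (by linarith)]; linarith [hτ₂.1]
      have hcomb := mix_combo X Y (a := 1 - μ) (b := μ) (by linarith) hμ0 (by ring)
        (le_trans h0 hτ₁.1) (by linarith [hτ₂.2]) (le_trans h0 (le_trans hτ₁.1 (le_of_lt hττ)))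
        (le_trans hτ₂.2 h1) h₁ h₂
      have hμy : (1 - μ) * τ₁ + μ * τ₂ = y := by
        rw [hμ]
        have hne : τ₂ - τ₁ ≠ 0 := ne_of_gt (by linarith)
        field_simp
        ring
      have hww : (1 - μ) • w + μ • w = w := by module
      rw [hμy, hww] at hcomb
      exact hcomb
  · intro w hw
    exact ⟨(mem_slabSet X Y).2 ⟨y, ⟨hxy, le_rfl⟩, hw⟩, (mem_slabSet X Y).2 ⟨y, ⟨le_rfl, hyz⟩, hw⟩⟩



def mixBody (X Y : ConvexBody (Eucl n)) (τ : ℝ) : ConvexBody (Eucl n) :=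
  (1 - τ) • X + τ • Y

lemma coe_mixBody (X Y : ConvexBody (Eucl n)) (τ : ℝ) :
    (mixBody X Y τ : Set (Eucl n)) = mixSet X Y τ := by
  simp [mixBody, mixSet, ConvexBody.coe_add, ConvexBody.coe_smul]

variable {ψ : ConvexBody (Eucl n) → ℝ}

/-- The additivity defect of `t • joinBody X Y` against `B`. -/
def vfun (ψ : ConvexBody (Eucl n) → ℝ) (X Y B : ConvexBody (Eucl n)) (t : ℝ) : ℝ :=
  ψ (t • joinBody X Y + B) - ψ (t • joinBody X Y) - ψ B

lemma vfun_zero (h : Hyp ψ) (X Y B : ConvexBody (Eucl n)) : vfun ψ X Y B 0 = 0 := by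
  unfold vfun
  rw [smul_body_zero (joinBody X Y), psi_translate h, psi_pt h]
  ring

lemma psi_slab_add (h : Hyp ψ) {X Y : ConvexBody (Eucl n)} (hX : Good ψ X) (hY : Good ψ Y)
    (B : ConvexBody (Eucl n)) {x y : ℝ} (h0 : 0 ≤ x) (hxy : x ≤ y) (h1 : y ≤ 1) :
    ψ (slabBody X Y x y + B) = vfun ψ X Y B (y - x) + ψ (slabBody X Y x y) + ψ B := by
  have hA : Good ψ ((1 - y) • X + x • Y) :=
    good_add (good_smul h (by linarith) hX) (good_smul h h0 hY)
  have e1 : ψ (slabBody X Y x y + B) =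
      ψ ((1 - y) • X + x • Y) + ψ ((y - x) • joinBody X Y + B) := by
    rw [slabBody, add_assoc]
    exact hA ((y - x) • joinBody X Y + B)
  have e2 : ψ (slabBody X Y x y) = ψ ((1 - y) • X + x • Y) + ψ ((y - x) • joinBody X Y) := by
    rw [slabBody]
    exact hA ((y - x) • joinBody X Y)
  rw [e1, e2]
  unfold vfun
  ring

lemma vfun_cocycle (h : Hyp ψ) {X Y : ConvexBody (Eucl n)} (hX : Good ψ X) (hY : Good ψ Y)
    (B : ConvexBody (Eucl n)) {x y z : ℝ} (h0 : 0 ≤ x) (hxy : x ≤ y) (hyz : y ≤ z) (h1 : z ≤ 1) :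
    vfun ψ X Y B (y - x) + vfun ψ X Y B (z - y) = vfun ψ X Y B (z - x) := by
  have hxz : x ≤ z := le_trans hxy hyz
  have hy0 : 0 ≤ y := le_trans h0 hxy
  have hy1 : y ≤ 1 := le_trans hyz h1
  have hPQconv : Convex ℝ ((slabBody X Y x y : Set (Eucl n)) ∪ (slabBody X Y y z : Set (Eucl n))) := by
    rw [coe_slabBody X Y h0 hxy hy1, coe_slabBody X Y hy0 hyz h1, slabSet_union X Y hxy hyz,
      ← coe_slabBody X Y h0 hxz h1]
    exact (slabBody X Y x z).convex
  have hM : (slabBody X Y x z : Set (Eucl n)) =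
      (slabBody X Y x y : Set (Eucl n)) ∪ (slabBody X Y y z : Set (Eucl n)) := by
    rw [coe_slabBody X Y h0 hxy hy1, coe_slabBody X Y hy0 hyz h1, slabSet_union X Y hxy hyz,
      ← coe_slabBody X Y h0 hxz h1]
  have hN : (mixBody X Y y : Set (Eucl n)) =
      (slabBody X Y x y : Set (Eucl n)) ∩ (slabBody X Y y z : Set (Eucl n)) := by
    rw [coe_slabBody X Y h0 hxy hy1, coe_slabBody X Y hy0 hyz h1,
      slabSet_inter X Y h0 hxy hyz h1, coe_mixBody]
  have hv0 := h.hval (slabBody X Y x y) (slabBody X Y y z) (slabBody X Y x z)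
    (mixBody X Y y) hPQconv hM hN
  have hvB := val_add h (slabBody X Y x y) (slabBody X Y y z) (slabBody X Y x z)
    (mixBody X Y y) B hPQconv hM hN
  have hmix : Good ψ (mixBody X Y y) :=
    good_add (good_smul h (by linarith) hX) (good_smul h hy0 hY)
  have e₁ := psi_slab_add h hX hY B h0 hxy hy1
  have e₂ := psi_slab_add h hX hY B hy0 hyz h1
  have e₃ := psi_slab_add h hX hY B h0 hxz h1
  have e₄ := hmix B
  rw [e₁, e₂, e₃, e₄] at hvB
  linarith [hv0, hvB]

lemma vfun_add_of_le_one (h : Hyp ψ) {X Y : ConvexBody (Eucl n)} (hX : Good ψ X)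
    (hY : Good ψ Y) (B : ConvexBody (Eucl n)) {p q : ℝ} (hp : 0 ≤ p) (hq : 0 ≤ q)
    (hpq : p + q ≤ 1) :
    vfun ψ X Y B (p + q) = vfun ψ X Y B p + vfun ψ X Y B q := by
  have := vfun_cocycle h hX hY B (x := 0) (y := p) (z := p + q)
    le_rfl hp (by linarith) hpq
  simp only [sub_zero, add_sub_cancel_left] at this
  linarith

lemma joinBody_smul (T : ℝ) (X Y : ConvexBody (Eucl n)) :
    joinBody (T • X) (T • Y) = T • joinBody X Y := by
  ext1
  rw [ConvexBody.coe_smul, coe_joinBody, coe_joinBody, joinSet_eq_hull, joinSet_eq_hull,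
    ConvexBody.coe_smul, ConvexBody.coe_smul, ← Set.smul_set_union, convexHull_smul]

lemma vfun_smul (T : ℝ) (X Y B : ConvexBody (Eucl n)) (a : ℝ) :
    vfun ψ (T • X) (T • Y) B a = vfun ψ X Y B (a * T) := by
  unfold vfun
  rw [joinBody_smul, smul_smul]

lemma vfun_add (h : Hyp ψ) {X Y : ConvexBody (Eucl n)} (hX : Good ψ X) (hY : Good ψ Y)
    (B : ConvexBody (Eucl n)) {p q : ℝ} (hp : 0 ≤ p) (hq : 0 ≤ q) :
    vfun ψ X Y B (p + q) = vfun ψ X Y B p + vfun ψ X Y B q := by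
  rcases eq_or_lt_of_le (by positivity : (0:ℝ) ≤ p + q) with h0 | h0
  · have hp0 : p = 0 := by linarith
    have hq0 : q = 0 := by linarith
    rw [hp0, hq0, add_zero, vfun_zero h]
    ring
  · set T := p + q with hT
    have hX' : Good ψ (T • X) := good_smul h (le_of_lt h0) hX
    have hY' : Good ψ (T • Y) := good_smul h (le_of_lt h0) hY
    have key := vfun_add_of_le_one h hX' hY' B (p := p/T) (q := q/T)
      (div_nonneg hp (le_of_lt h0)) (div_nonneg hq (le_of_lt h0))
      (by rw [← add_div, ← hT, div_self (ne_of_gt h0)])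
    rw [vfun_smul, vfun_smul, vfun_smul] at key
    have e1 : (p/T + q/T) * T = p + q := by
      rw [← add_div, ← hT, div_mul_cancel₀ _ (ne_of_gt h0)]
    have e2 : p/T * T = p := div_mul_cancel₀ _ (ne_of_gt h0)
    have e3 : q/T * T = q := div_mul_cancel₀ _ (ne_of_gt h0)
    rw [e1, e2, e3] at key
    exact key

lemma vfun_continuous (h : Hyp ψ) (X Y B : ConvexBody (Eucl n)) :
    Continuous (vfun ψ X Y B) := by
  unfold vfun
  apply Continuous.sub
  apply Continuous.sub
  · exact h.hcont.comp ((continuous_add_body B).comp (continuous_smul_body (joinBody X Y)))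
  · exact h.hcont.comp (continuous_smul_body (joinBody X Y))
  · exact continuous_const

lemma vfun_nsmul (h : Hyp ψ) {X Y : ConvexBody (Eucl n)} (hX : Good ψ X) (hY : Good ψ Y)
    (B : ConvexBody (Eucl n)) {x : ℝ} (hx : 0 ≤ x) :
    ∀ k : ℕ, vfun ψ X Y B (k * x) = k * vfun ψ X Y B x := by
  intro k
  induction k with
  | zero => simp [vfun_zero h]
  | succ k ih =>
    push_cast
    rw [add_mul, one_mul, vfun_add h hX hY B (by positivity) hx, ih]
    ring

lemma vfun_linear (h : Hyp ψ) {X Y : ConvexBody (Eucl n)} (hX : Good ψ X) (hY : Good ψ Y)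
    (B : ConvexBody (Eucl n)) {t : ℝ} (ht : 0 ≤ t) :
    vfun ψ X Y B t = t * vfun ψ X Y B 1 := by
  have hval : ∀ (k j : ℕ), 0 < j →
      vfun ψ X Y B ((k : ℝ)/(j : ℝ)) = (k : ℝ)/(j : ℝ) * vfun ψ X Y B 1 := by
    intro k j hj
    have hj0 : (0:ℝ) < j := Nat.cast_pos.2 hj
    have hinv : (0:ℝ) ≤ 1/(j : ℝ) := by positivity
    have h1 := vfun_nsmul h hX hY B hinv k
    have h2 := vfun_nsmul h hX hY B hinv j
    have h3 : (j : ℝ) * (1/(j : ℝ)) = 1 := by field_simp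
    rw [h3] at h2
    have h4 : vfun ψ X Y B (1/(j:ℝ)) = vfun ψ X Y B 1 / j := by
      rw [eq_div_iff (ne_of_gt hj0)]
      linarith [h2]
    calc vfun ψ X Y B ((k : ℝ)/(j:ℝ)) = vfun ψ X Y B ((k:ℝ) * (1/(j:ℝ))) := by
          rw [mul_one_div]
      _ = (k:ℝ) * (vfun ψ X Y B 1 / (j:ℝ)) := by rw [h1, h4]
      _ = (k : ℝ)/(j : ℝ) * vfun ψ X Y B 1 := by ring
  have hseq : Tendsto (fun j : ℕ => ((⌊t * j⌋₊ : ℝ)/(j : ℝ))) atTop (𝓝 t) :=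
    (tendsto_nat_floor_mul_div_atTop ht).comp tendsto_natCast_atTop_atTop
  have h1 : Tendsto (fun j : ℕ => vfun ψ X Y B ((⌊t * j⌋₊ : ℝ)/(j : ℝ))) atTop
      (𝓝 (vfun ψ X Y B t)) :=
    ((vfun_continuous h X Y B).tendsto t).comp hseq
  have h2 : Tendsto (fun j : ℕ => vfun ψ X Y B ((⌊t * j⌋₊ : ℝ)/(j : ℝ))) atTop
      (𝓝 (t * vfun ψ X Y B 1)) := by
    have hcong : ∀ᶠ j : ℕ in atTop,
        ((⌊t * j⌋₊ : ℝ)/(j : ℝ)) * vfun ψ X Y B 1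
          = vfun ψ X Y B ((⌊t * j⌋₊ : ℝ)/(j : ℝ)) := by
      filter_upwards [eventually_gt_atTop 0] with j hj
      exact (hval _ j hj).symm
    exact Tendsto.congr' hcong (hseq.mul_const _)
  exact tendsto_nhds_unique h1 h2

lemma good_join (h : Hyp ψ) {X Y : ConvexBody (Eucl n)} (hX : Good ψ X) (hY : Good ψ Y) :
    Good ψ (joinBody X Y) := by
  intro B
  set w : ℝ → ℝ := fun t => ψ (t • B + joinBody X Y) - ψ (joinBody X Y) - ψ (t • B) with hw
  have hwcont : Continuous w := by
    rw [hw]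
    apply Continuous.sub
    apply Continuous.sub
    · exact h.hcont.comp ((continuous_add_body (joinBody X Y)).comp (continuous_smul_body B))
    · exact continuous_const
    · exact h.hcont.comp (continuous_smul_body B)
  have hw0 : w 0 = 0 := by
    rw [hw]
    simp only
    rw [smul_body_zero B, psi_translate h, psi_pt h]
    ring
  have hconst : ∀ t : ℝ, 0 < t → w t = w 1 := by
    intro t ht
    have hsum : ψ (t • joinBody X Y + t • B) = t * ψ (B + joinBody X Y) := by
      have hdistrib : t • (joinBody X Y + B) = t • joinBody X Y + t • B := smul_add t _ _
      rw [← hdistrib, h.hhom t ht, add_comm (joinBody X Y) B]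
    have hJ : ψ (t • joinBody X Y) = t * ψ (joinBody X Y) := h.hhom t ht (joinBody X Y)
    have hB : ψ (t • B) = t * ψ B := h.hhom t ht B
    have eA : vfun ψ X Y (t • B) t = t * vfun ψ X Y (t • B) 1 :=
      vfun_linear h hX hY (t • B) (le_of_lt ht)
    have eB : vfun ψ X Y (t • B) t = t * w 1 := by
      unfold vfun
      rw [hsum, hJ, hB, hw]
      simp only [one_smul]
      ring
    have eC : vfun ψ X Y (t • B) 1 = w t := by
      unfold vfun
      rw [hw]
      simp only [one_smul]
      rw [add_comm (joinBody X Y) (t • B)]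
    have : t * w 1 = t * w t := by rw [← eB, eA, eC]
    exact (mul_left_cancel₀ (ne_of_gt ht) this).symm
  have hlim : Tendsto (fun j : ℕ => w (1/((j : ℝ)+1))) atTop (𝓝 (w 0)) := by
    apply (hwcont.tendsto 0).comp
    simpa using tendsto_one_div_add_atTop_nhds_zero_nat (𝕜 := ℝ)
  have hwconstseq : ∀ j : ℕ, w (1/((j : ℝ)+1)) = w 1 := fun j => hconst _ (by positivity)
  have hkey : w 1 = w 0 := by
    have h2 : Tendsto (fun j : ℕ => w (1/((j : ℝ)+1))) atTop (𝓝 (w 1)) := by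
      rw [tendsto_congr hwconstseq]
      exact tendsto_const_nhds
    exact tendsto_nhds_unique h2 hlim
  have hw1 : w 1 = 0 := by rw [hkey, hw0]
  rw [hw] at hw1
  simp only [one_smul] at hw1
  rw [add_comm (joinBody X Y) B]
  linarith [hw1]

def polyBody (s : Finset (Eucl n)) (hs : s.Nonempty) : ConvexBody (Eucl n) :=
  ⟨convexHull ℝ (s : Set (Eucl n)), convex_convexHull ℝ _, s.finite_toSet.isCompact_convexHull (𝕜 := ℝ),
    (Finset.coe_nonempty.mpr hs).mono (subset_convexHull ℝ _)⟩

@[simp] lemma coe_polyBody (s : Finset (Eucl n)) (hs : s.Nonempty) :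
    (polyBody s hs : Set (Eucl n)) = convexHull ℝ (s : Set (Eucl n)) := rfl

lemma good_polyBody (h : Hyp ψ) :
    ∀ (s : Finset (Eucl n)) (hs : s.Nonempty), Good ψ (polyBody s hs) := by
  intro s
  induction s using Finset.cons_induction with
  | empty => intro hs; exact absurd hs (by simp)
  | cons a s ha ih =>
    intro hs
    rcases s.eq_empty_or_nonempty with rfl | hne
    · apply good_congr (A := pt a) _ (good_pt h a)
      ext1
      rw [coe_pt, coe_polyBody]
      simp [convexHull_singleton]
    · apply good_congr (A := joinBody (pt a) (polyBody s hne)) _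
        (good_join h (good_pt h a) (ih hne))
      ext1
      rw [coe_joinBody, joinSet_eq_hull, coe_pt, coe_polyBody, coe_polyBody,
        convexHull_convexHull_union_right, ← Set.insert_eq, Finset.coe_cons]

lemma good_all (h : Hyp ψ) (A : ConvexBody (Eucl n)) : Good ψ A := by
  have happrox : ∀ ε : ℝ, 0 < ε → ∃ P : ConvexBody (Eucl n), Good ψ P ∧ dist P A ≤ ε := by
    intro ε hε
    obtain ⟨t, htA, hcover⟩ := A.isCompact.elim_nhds_subcover (fun x => Metric.ball x ε)
      (fun x _ => Metric.ball_mem_nhds x hε)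
    have htne : t.Nonempty := by
      obtain ⟨a, ha⟩ := A.nonempty
      obtain ⟨x, hx, -⟩ := Set.mem_iUnion₂.1 (hcover ha)
      exact ⟨x, hx⟩
    refine ⟨polyBody t htne, good_polyBody h t htne, ?_⟩
    have hPA : (polyBody t htne : Set (Eucl n)) ⊆ (A : Set (Eucl n)) :=
      convexHull_min (fun x hx => htA x hx) A.convex
    rw [← ConvexBody.hausdorffDist_coe]
    apply Metric.hausdorffDist_le_of_mem_dist (le_of_lt hε)
    · intro p hp
      exact ⟨p, hPA hp, by simp only [dist_self]; exact le_of_lt hε⟩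
    · intro a ha
      obtain ⟨x, hx, hball⟩ := Set.mem_iUnion₂.1 (hcover ha)
      exact ⟨x, subset_convexHull ℝ _ (Finset.mem_coe.2 hx), le_of_lt (Metric.mem_ball.1 hball)⟩
  have hseq : ∀ j : ℕ, ∃ P : ConvexBody (Eucl n), Good ψ P ∧ dist P A ≤ 1/((j:ℝ)+1) :=
    fun j => happrox _ (by positivity)
  choose P hPg hPd using hseq
  have hten : Tendsto P atTop (𝓝 A) := by
    rw [tendsto_iff_dist_tendsto_zero]
    apply squeeze_zero (fun j => dist_nonneg) hPd
    simpa using tendsto_one_div_add_atTop_nhds_zero_nat (𝕜 := ℝ)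
  intro B
  have t1 : Tendsto (fun j => ψ (P j + B)) atTop (𝓝 (ψ (A + B))) :=
    ((h.hcont.comp (continuous_add_body B)).tendsto A).comp hten
  have t2 : Tendsto (fun j => ψ (P j) + ψ B) atTop (𝓝 (ψ A + ψ B)) :=
    ((h.hcont.tendsto A).comp hten).add tendsto_const_nhds
  have heq : (fun j => ψ (P j + B)) = fun j => ψ (P j) + ψ B := funext fun j => hPg j B
  rw [heq] at t1
  exact tendsto_nhds_unique t1 t2

end SpiegelProof

/-- Spiegel: every continuous, translation invariant valuation
`ψ : K^n → ℝ` that is homogeneous of degree 1 is Minkowski additive. -/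
theorem minkowski_additivity_of_degree_one (n : ℕ)
    (ψ : ConvexBody (Eucl n) → ℝ)
    (hval : ∀ K L M N : ConvexBody (Eucl n),
      Convex ℝ ((K : Set (Eucl n)) ∪ L) →
      (M : Set (Eucl n)) = (K : Set (Eucl n)) ∪ L →
      (N : Set (Eucl n)) = (K : Set (Eucl n)) ∩ L →
      ψ K + ψ L = ψ M + ψ N)
    (hcont : Continuous ψ)
    (htrans : ∀ (x : Eucl n) (K K' : ConvexBody (Eucl n)),
      (K' : Set (Eucl n)) = (fun y => x + y) '' (K : Set (Eucl n)) → ψ K' = ψ K)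
    (hhom : ∀ (c : ℝ), 0 < c → ∀ K : ConvexBody (Eucl n), ψ (c • K) = c * ψ K) :
    ∀ K L : ConvexBody (Eucl n), ψ (K + L) = ψ K + ψ L := by
  intro K L
  exact SpiegelProof.good_all ⟨hval, hcont, htrans, hhom⟩ K L
end
end
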